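/- Let G1 be a connected δ1-regular graph on n vertices with δ1 ≥ 4 and G2 be a connected δ2-regular graph on δ1 vertices, and write κ1 = κ(G1), λi = λ(Gi) for i = 1,2, and λ2' = λ'(G2). Then min{λ1, κ1+λ2−1, 2λ2, λ2'+2} ≤ λ'(G1®G2) ≤ min{λ1, 2δ2}. -/

import Mathlib

open SimpleGraph

section Defs

variable {V : Type*}

/-- The set of edges of `G` with one endpoint in `X` and the other outside `X`. -/
def edgeBoundary (G : SimpleGraph V) (X : Set V) : Set (Sym2 V) :=
  {e | e ∈ G.edgeSet ∧ ∃ u ∈ X, ∃ v ∈ Xᶜ, e = s(u, v)}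

/-- The edge-connectivity `λ(G)`: the minimum number of edges whose removal disconnects `G`. -/
noncomputable def edgeConn (G : SimpleGraph V) : ℕ :=
  sInf {k | ∃ F : Set (Sym2 V), F ⊆ G.edgeSet ∧ F.ncard = k ∧ ¬(G.deleteEdges F).Connected}

/-- `F` is a restricted edge-cut of `G`: removing `F` disconnects `G` and leaves no
isolated vertices. -/
def IsRestrictedEdgeCut (G : SimpleGraph V) (F : Set (Sym2 V)) : Prop :=
  F ⊆ G.edgeSet ∧ ¬(G.deleteEdges F).Connected ∧ ∀ v : V, ∃ w : V, (G.deleteEdges F).Adj v w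

/-- The restricted edge-connectivity `λ'(G)`. -/
noncomputable def restrictedEdgeConn (G : SimpleGraph V) : ℕ :=
  sInf {k | ∃ F : Set (Sym2 V), IsRestrictedEdgeCut G F ∧ F.ncard = k}

/-- The vertex-connectivity `κ(G)`: the minimum size of a set of vertices whose removal
leaves a disconnected graph or a graph with at most one vertex. -/
noncomputable def vertexConn (G : SimpleGraph V) : ℕ :=
  sInf {k | ∃ S : Set V, S.ncard = k ∧
    (¬(G.induce (Sᶜ : Set V)).Connected ∨ (Sᶜ : Set V).ncard ≤ 1)}

/-- The minimum edge-degree `ξ(G) = min {d(u) + d(v) - 2 : uv ∈ E(G)}`. -/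
noncomputable def minEdgeDegree (G : SimpleGraph V) : ℕ :=
  sInf {k | ∃ u v : V, G.Adj u v ∧ (G.neighborSet u).ncard + (G.neighborSet v).ncard - 2 = k}

/-- `G` is `λ'`-optimal if `λ'(G) = ξ(G)`. -/
def LambdaPrimeOptimal (G : SimpleGraph V) : Prop :=
  restrictedEdgeConn G = minEdgeDegree G

/-- The replacement product of `G1` and `G2` with respect to an edge-labelling `ℓ`,
where `ℓ x i` is the other endpoint of the edge of `G1` labelled `i` at the vertex `x`.
Vertices `(x, i)` and `(y, j)` are adjacent iff either `x = y` and `i j ∈ E(G2)`, or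
`x y ∈ E(G1)` and the edge `x y` is labelled `i` at `x` and `j` at `y`. -/
def replacementProduct {V1 V2 : Type*} (G1 : SimpleGraph V1) (G2 : SimpleGraph V2)
    (ℓ : V1 → V2 → V1) : SimpleGraph (V1 × V2) where
  Adj p q := (p.1 = q.1 ∧ G2.Adj p.2 q.2) ∨
    (G1.Adj p.1 q.1 ∧ ℓ p.1 p.2 = q.1 ∧ ℓ q.1 q.2 = p.1)
  symm := by
    constructor
    rintro p q (⟨h1, h2⟩ | ⟨h1, h2, h3⟩)
    · exact Or.inl ⟨h1.symm, h2.symm⟩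
    · exact Or.inr ⟨h1.symm, h3, h2⟩
  loopless := by
    constructor
    rintro p (⟨_, h⟩ | ⟨h, _⟩)
    · exact G2.irrefl h
    · exact G1.irrefl h

/-- `ℓ` is a valid edge-labelling of `G1` for the replacement product:
for each vertex `x`, `ℓ x` is injective and `ℓ x i` is always a neighbour of `x`
(hence `ℓ x` enumerates the neighbours of `x` when `G1` is `|V2|`-regular). -/
def IsRPLabelling {V1 V2 : Type*} (G1 : SimpleGraph V1) (ℓ : V1 → V2 → V1) : Prop :=
  (∀ x, Function.Injective (ℓ x)) ∧ ∀ x i, G1.Adj x (ℓ x i)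

end Defs



section Aux
variable {V : Type*}

lemma invariant_of_walk {G : SimpleGraph V} {P : V → Prop}
    (hP : ∀ a b, G.Adj a b → P a → P b) :
    ∀ {u v : V}, G.Walk u v → P u → P v := by
  intro u v w
  induction w with
  | nil => exact id
  | cons h _ ih => exact fun hu => ih (hP _ _ h hu)

lemma not_connected_of_invariant {G : SimpleGraph V} {P : V → Prop}
    (hP : ∀ a b, G.Adj a b → P a → P b) {u v : V} (hu : P u) (hv : ¬ P v) :
    ¬ G.Connected := by
  intro hc
  obtain ⟨w⟩ := hc.preconnected u v
  exact hv (invariant_of_walk hP w hu)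

lemma ncard_big {α : Type*} [Fintype α] {s : Set α} (h : s.ncard < Fintype.card α) :
    ∃ w, w ∉ s := by
  by_contra hc
  push_neg at hc
  have h2 : (Set.univ : Set α).ncard ≤ s.ncard :=
    Set.ncard_le_ncard (fun w _ => hc w) (Set.toFinite _)
  rw [Set.ncard_univ, Nat.card_eq_fintype_card] at h2
  omega

lemma edgeConn_le {G : SimpleGraph V} {F : Set (Sym2 V)} (h1 : F ⊆ G.edgeSet)
    (h2 : ¬(G.deleteEdges F).Connected) : edgeConn G ≤ F.ncard :=
  Nat.sInf_le ⟨F, h1, rfl, h2⟩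

lemma restrictedEdgeConn_le {G : SimpleGraph V} {F : Set (Sym2 V)}
    (h : IsRestrictedEdgeCut G F) : restrictedEdgeConn G ≤ F.ncard :=
  Nat.sInf_le ⟨F, h, rfl⟩
end Aux

section RP
variable {V1 V2 : Type*} [Fintype V1] [Fintype V2]

def copyE (V2 : Type*) (x : V1) : Set (Sym2 (V1 × V2)) :=
  {e | ∃ i j : V2, e = s((x, i), (x, j))}

def crossE (V1 V2 : Type*) : Set (Sym2 (V1 × V2)) :=
  {e | ∃ p q : V1 × V2, p.1 ≠ q.1 ∧ e = s(p, q)}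

omit [Fintype V1] [Fintype V2] in
lemma copyE_crossE_disj (x : V1) : Disjoint (copyE V2 x) (crossE V1 V2) := by
  rw [Set.disjoint_left]
  rintro e ⟨i, j, rfl⟩ ⟨p, q, hpq, he⟩
  rw [Sym2.eq_iff] at he
  rcases he with ⟨h1, h2⟩ | ⟨h1, h2⟩ <;> rw [← h1, ← h2] at hpq <;> exact hpq rfl

omit [Fintype V1] [Fintype V2] in
lemma copyE_disj {x y : V1} (hxy : x ≠ y) : Disjoint (copyE V2 x) (copyE V2 y) := by
  rw [Set.disjoint_left]
  rintro e ⟨i, j, rfl⟩ ⟨i', j', he⟩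
  rw [Sym2.eq_iff] at he
  rcases he with ⟨h1, _⟩ | ⟨h1, _⟩ <;> exact hxy (congrArg Prod.fst h1)

lemma copy_cut (G1 : SimpleGraph V1) (G2 : SimpleGraph V2) (ℓ : V1 → V2 → V1)
    (F : Set (Sym2 (V1 × V2))) (X : Set (V1 × V2)) (x : V1)
    (hbd : ∀ p q, (replacementProduct G1 G2 ℓ).Adj p q → p ∈ X → q ∉ X → s(p, q) ∈ F)
    (h1 : ∃ i, (x, i) ∈ X) (h2 : ∃ i, (x, i) ∉ X) :
    edgeConn G2 ≤ (F ∩ copyE V2 x).ncard := by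
  classical
  set Dx : Set (Sym2 V2) :=
    {e ∈ G2.edgeSet | ∃ i j : V2, (x, i) ∈ X ∧ (x, j) ∉ X ∧ e = s(i, j)} with hDx
  obtain ⟨i1, hi1⟩ := h1
  obtain ⟨j1, hj1⟩ := h2
  have hcut : ¬(G2.deleteEdges Dx).Connected := by
    refine not_connected_of_invariant (P := fun i => (x, i) ∈ X) ?_ hi1 hj1
    intro a b hab ha
    rw [SimpleGraph.deleteEdges_adj] at hab
    by_contra hb
    exact hab.2 ⟨hab.1, a, b, ha, hb, rfl⟩
  have hsub : Dx ⊆ Sym2.map Prod.snd '' (F ∩ copyE V2 x) := by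
    rintro e ⟨he, i, j, hi, hj, rfl⟩
    refine ⟨s((x, i), (x, j)), ⟨hbd _ _ (Or.inl ⟨rfl, he⟩) hi hj, i, j, rfl⟩, ?_⟩
    simp [Sym2.map_pair_eq]
  calc edgeConn G2 ≤ Dx.ncard := edgeConn_le (Set.sep_subset _ _) hcut
    _ ≤ (Sym2.map Prod.snd '' (F ∩ copyE V2 x)).ncard :=
        Set.ncard_le_ncard hsub (Set.toFinite _)
    _ ≤ (F ∩ copyE V2 x).ncard := Set.ncard_image_le (Set.toFinite _)

end RP

section Small
variable {V1 V2 : Type*} [Fintype V1] [Fintype V2]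

lemma small_side {δ2 : ℕ} (G1 : SimpleGraph V1) (G2 : SimpleGraph V2) (ℓ : V1 → V2 → V1)
    (hℓ : IsRPLabelling G1 ℓ)
    (hsurj : ∀ x y, G1.Adj x y → ∃ i, ℓ x i = y)
    (hr2 : ∀ i : V2, (G2.neighborSet i).ncard = δ2)
    (hlam : edgeConn G2 ≤ δ2)
    (F : Set (Sym2 (V1 × V2)))
    (hFres : ∀ p, ∃ q, ((replacementProduct G1 G2 ℓ).deleteEdges F).Adj p q)
    (Z : Set (V1 × V2)) (x : V1)
    (hbd : ∀ p q, (replacementProduct G1 G2 ℓ).Adj p q → p ∈ Z → q ∉ Z → s(p, q) ∈ F)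
    (hZ : ∀ w, w ∈ Z → w.1 = x)
    (hx1 : ∃ i, (x, i) ∈ Z) (hx2 : ∃ i, (x, i) ∉ Z) :
    min (2 * edgeConn G2) (restrictedEdgeConn G2 + 2) ≤ F.ncard := by
  classical
  set H := replacementProduct G1 G2 ℓ with hH
  -- cross neighbours
  have hcr : ∀ j : V2, ∃ q : V1 × V2, H.Adj (x, j) q ∧ q.1 ≠ x := by
    intro j
    obtain ⟨k, hk⟩ := hsurj (ℓ x j) x (hℓ.2 x j).symm
    exact ⟨(ℓ x j, k), Or.inr ⟨hℓ.2 x j, rfl, hk⟩, (G1.ne_of_adj (hℓ.2 x j)).symm⟩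
  choose c hc1 hc2 using hcr
  -- each Z-vertex contributes its own cross edge of F
  have hcf : ∀ j : V2, (x, j) ∈ Z → s((x, j), c j) ∈ F ∩ crossE V1 V2 := by
    intro j hj
    have hcz : c j ∉ Z := fun hmem => hc2 j (hZ _ hmem)
    exact ⟨hbd _ _ (hc1 j) hj hcz, (x, j), c j, fun h => hc2 j h.symm, rfl⟩
  have hinj : Set.InjOn (fun j => s((x, j), c j)) {j | (x, j) ∈ Z} := by
    intro j _ j' _ he
    simp only [Sym2.eq_iff] at he
    rcases he with ⟨h1, _⟩ | ⟨h1, _⟩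
    · exact congrArg Prod.snd h1
    · exact absurd (congrArg Prod.fst h1).symm (hc2 j')
  have hZcross : {j | (x, j) ∈ Z}.ncard ≤ (F ∩ crossE V1 V2).ncard :=
    Set.ncard_le_ncard_of_injOn _ (fun j hj => hcf j hj) hinj (Set.toFinite _)
  -- Z has at least two vertices in the copy
  obtain ⟨i1, hi1⟩ := hx1
  have htwo : ∃ i2, (x, i2) ∈ Z ∧ i2 ≠ i1 := by
    obtain ⟨w, hw⟩ := hFres (x, i1)
    rw [SimpleGraph.deleteEdges_adj] at hw
    have hwZ : w ∈ Z := by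
      by_contra hwZ
      exact hw.2 (hbd _ _ hw.1 hi1 hwZ)
    have hwx : w.1 = x := hZ _ hwZ
    refine ⟨w.2, by rwa [← hwx], ?_⟩
    intro h
    have hwi : w = (x, i1) := Prod.ext hwx h
    rw [hwi] at hw
    exact H.irrefl hw.1
  obtain ⟨i2, hi2, hi2ne⟩ := htwo
  -- the within-copy cut
  set Dx : Set (Sym2 V2) :=
    {e ∈ G2.edgeSet | ∃ i j : V2, (x, i) ∈ Z ∧ (x, j) ∉ Z ∧ e = s(i, j)} with hDx
  obtain ⟨j1, hj1⟩ := hx2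
  have hcut : ¬(G2.deleteEdges Dx).Connected := by
    refine not_connected_of_invariant (P := fun i => (x, i) ∈ Z) ?_ hi1 hj1
    intro a b hab ha
    rw [SimpleGraph.deleteEdges_adj] at hab
    by_contra hb
    exact hab.2 ⟨hab.1, a, b, ha, hb, rfl⟩
  have hDxsub : Dx ⊆ G2.edgeSet := Set.sep_subset _ _
  have hDxlift : Dx.ncard ≤ (F ∩ copyE V2 x).ncard := by
    have hsub : Dx ⊆ Sym2.map Prod.snd '' (F ∩ copyE V2 x) := by
      rintro e ⟨he, i, j, hi, hj, rfl⟩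
      refine ⟨s((x, i), (x, j)), ⟨hbd _ _ (Or.inl ⟨rfl, he⟩) hi hj, i, j, rfl⟩, ?_⟩
      simp [Sym2.map_pair_eq]
    calc Dx.ncard ≤ (Sym2.map Prod.snd '' (F ∩ copyE V2 x)).ncard :=
          Set.ncard_le_ncard hsub (Set.toFinite _)
      _ ≤ (F ∩ copyE V2 x).ncard := Set.ncard_image_le (Set.toFinite _)
  have hlamDx : edgeConn G2 ≤ Dx.ncard := edgeConn_le hDxsub hcut
  -- the two parts of F are disjoint
  have hsum : (F ∩ copyE V2 x).ncard + (F ∩ crossE V1 V2).ncard ≤ F.ncard := by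
    rw [← Set.ncard_union_eq ((copyE_crossE_disj x).mono (Set.inter_subset_right)
      (Set.inter_subset_right)) (Set.toFinite _) (Set.toFinite _)]
    exact Set.ncard_le_ncard (Set.union_subset Set.inter_subset_left Set.inter_subset_left)
      (Set.toFinite _)
  by_cases hiso : ∀ i : V2, ∃ j, (G2.deleteEdges Dx).Adj i j
  · -- restricted cut in the copy, plus two cross edges
    have hres : restrictedEdgeConn G2 ≤ Dx.ncard :=
      restrictedEdgeConn_le ⟨hDxsub, hcut, hiso⟩
    have h2cr : 2 ≤ (F ∩ crossE V1 V2).ncard := by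
      have hne : s((x, i2), c i2) ≠ s((x, i1), c i1) := by
        intro he
        rw [Sym2.eq_iff] at he
        rcases he with ⟨h1, _⟩ | ⟨h1, _⟩
        · exact hi2ne (congrArg Prod.snd h1)
        · exact (hc2 i1) (congrArg Prod.fst h1).symm
      calc 2 = ({s((x, i2), c i2), s((x, i1), c i1)} : Set (Sym2 (V1 × V2))).ncard :=
            (Set.ncard_pair hne).symm
        _ ≤ (F ∩ crossE V1 V2).ncard := Set.ncard_le_ncard
            (by rintro e (rfl | rfl); exacts [hcf i2 hi2, hcf i1 hi1]) (Set.toFinite _)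
    have hmin : min (2 * edgeConn G2) (restrictedEdgeConn G2 + 2)
        ≤ restrictedEdgeConn G2 + 2 := min_le_right _ _
    omega
  · -- some vertex of the copy is isolated by Dx
    push_neg at hiso
    obtain ⟨i0, hi0⟩ := hiso
    have hDmem : ∀ j, G2.Adj i0 j → s(i0, j) ∈ Dx := by
      intro j hj
      by_contra hn
      exact hi0 j (by rw [SimpleGraph.deleteEdges_adj]; exact ⟨hj, hn⟩)
    have hi0Z : (x, i0) ∉ Z := by
      intro hi0Z
      obtain ⟨w, hw⟩ := hFres (x, i0)
      rw [SimpleGraph.deleteEdges_adj] at hw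
      have hwZ : w ∈ Z := by
        by_contra hwZ
        exact hw.2 (hbd _ _ hw.1 hi0Z hwZ)
      have hwx : w.1 = x := hZ _ hwZ
      rcases hw.1 with ⟨_, hadj⟩ | ⟨hadj, _, _⟩
      · -- copy edge: w = (x, w.2) with G2.Adj i0 w.2
        obtain ⟨_, ii, jj, hii, hjj, heq⟩ := hDmem w.2 hadj
        rw [Sym2.eq_iff] at heq
        rcases heq with ⟨h1, h2⟩ | ⟨h1, h2⟩
        · subst h1; subst h2
          exact hjj (by rw [show ((x, w.2) : V1 × V2) = w from Prod.ext hwx.symm rfl]; exact hwZ)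
        · subst h1
          exact hjj hi0Z
      · exact (G1.ne_of_adj hadj) hwx.symm
    -- all neighbours of i0 lie in the Z-side
    have hNsub : G2.neighborSet i0 ⊆ {j | (x, j) ∈ Z} := by
      intro j hj
      obtain ⟨_, ii, jj, hii, hjj, heq⟩ := hDmem j hj
      rw [Sym2.eq_iff] at heq
      rcases heq with ⟨h1, h2⟩ | ⟨h1, h2⟩
      · subst h1; exact absurd hii hi0Z
      · subst h1; subst h2; exact hii
    have hdN : δ2 ≤ {j | (x, j) ∈ Z}.ncard := by
      rw [← hr2 i0]
      exact Set.ncard_le_ncard hNsub (Set.toFinite _)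
    have hmin : min (2 * edgeConn G2) (restrictedEdgeConn G2 + 2)
        ≤ 2 * edgeConn G2 := min_le_left _ _
    omega

end Small

section Kappa
variable {V1 : Type*} [Fintype V1]

lemma kappa_bound (G1 : SimpleGraph V1) (x : V1) (A B : Set V1)
    (hcov : ∀ y, y ≠ x → y ∈ A ∨ y ∈ B)
    (hdisj : ∀ y, y ∈ A → y ∉ B) (hxA : x ∉ A) (hxB : x ∉ B)
    (hA : A.Nonempty) (hB : B.Nonempty) :
    vertexConn G1 ≤ {e ∈ G1.edgeSet | ∃ a ∈ A, ∃ b ∈ B, e = s(a, b)}.ncard + 1 := by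
  classical
  set D := {e ∈ G1.edgeSet | ∃ a ∈ A, ∃ b ∈ B, e = s(a, b)} with hD
  by_cases hcase : ∃ a ∈ A, ∀ b ∈ B, ¬ G1.Adj a b
  · obtain ⟨a0, ha0A, ha0⟩ := hcase
    set EA := {a ∈ A | ∃ b ∈ B, G1.Adj a b} with hEA
    set S0 : Set V1 := insert x EA with hS0
    have hEAD : EA.ncard ≤ D.ncard := by
      have hch : ∀ a, a ∈ EA → ∃ b, b ∈ B ∧ G1.Adj a b := by
        rintro a ⟨_, b, hb, hadj⟩; exact ⟨b, hb, hadj⟩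
      choose! f hf1 hf2 using hch
      refine Set.ncard_le_ncard_of_injOn (fun a => s(a, f a)) ?_ ?_ (Set.toFinite _)
      · intro a ha
        exact ⟨hf2 a ha, a, ha.1, f a, hf1 a ha, rfl⟩
      · intro a ha a' ha' heq
        rw [Sym2.eq_iff] at heq
        rcases heq with ⟨h1, _⟩ | ⟨h1, h2⟩
        · exact h1
        · exact absurd (h1 ▸ hf1 a' ha') (hdisj a ha.1)
    have hS0card : S0.ncard ≤ D.ncard + 1 :=
      le_trans (Set.ncard_insert_le _ _) (by omega)
    refine le_trans (Nat.sInf_le ⟨S0, rfl, Or.inl ?_⟩) hS0card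
    have ha0c : a0 ∈ S0ᶜ := by
      intro h
      rcases Set.mem_insert_iff.mp h with h | h
      · exact hxA (h ▸ ha0A)
      · obtain ⟨_, b, hbB, hadj⟩ := h
        exact ha0 b hbB hadj
    obtain ⟨b0, hb0B⟩ := hB
    have hb0c : b0 ∈ S0ᶜ := by
      intro h
      rcases Set.mem_insert_iff.mp h with h | h
      · exact hxB (h ▸ hb0B)
      · exact hdisj b0 h.1 hb0B
    refine not_connected_of_invariant (G := G1.induce (S0ᶜ : Set V1))
      (P := fun w => (w : V1) ∈ A) ?_ (u := ⟨a0, ha0c⟩) (v := ⟨b0, hb0c⟩)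
      ha0A (fun h => hdisj b0 h hb0B)
    rintro ⟨w1, hw1⟩ ⟨w2, hw2⟩ hadj hw1A
    have hadj' : G1.Adj w1 w2 := hadj
    have hw2x : w2 ≠ x := by
      intro h; exact hw2 (h ▸ Set.mem_insert _ _)
    rcases hcov w2 hw2x with h | h
    · exact h
    · refine absurd ?_ hw1
      exact Set.mem_insert_iff.mpr (Or.inr ⟨hw1A, w2, h, hadj'⟩)
  · push_neg at hcase
    obtain ⟨a0, ha0A⟩ := hA
    set NB := {b ∈ B | G1.Adj a0 b} with hNB
    set S0 : Set V1 := insert x ((A \ {a0}) ∪ NB) with hS0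
    have hcard : ((A \ {a0}) ∪ NB).ncard ≤ D.ncard := by
      choose! f hf1 hf2 using hcase
      refine Set.ncard_le_ncard_of_injOn
        (fun y => if y ∈ A then s(y, f y) else s(a0, y)) ?_ ?_ (Set.toFinite _)
      · rintro y (⟨hyA, -⟩ | ⟨hyB, hyadj⟩)
        · show (if y ∈ A then s(y, f y) else s(a0, y)) ∈ D
          rw [if_pos hyA]
          exact ⟨hf2 y hyA, y, hyA, f y, hf1 y hyA, rfl⟩
        · show (if y ∈ A then s(y, f y) else s(a0, y)) ∈ D
          rw [if_neg (fun h => hdisj y h hyB)]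
          exact ⟨hyadj, a0, ha0A, y, hyB, rfl⟩
      · intro y hy y' hy' heq
        have hyA' : y ∈ A \ {a0} ∨ y ∈ NB := hy
        have hy'A' : y' ∈ A \ {a0} ∨ y' ∈ NB := hy'
        have heq' : (if y ∈ A then s(y, f y) else s(a0, y))
            = (if y' ∈ A then s(y', f y') else s(a0, y')) := heq
        clear heq
        by_cases hyA : y ∈ A <;> by_cases hy'A : y' ∈ A <;>
          [rw [if_pos hyA, if_pos hy'A] at heq';
           rw [if_pos hyA, if_neg hy'A] at heq';
           rw [if_neg hyA, if_pos hy'A] at heq';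
           rw [if_neg hyA, if_neg hy'A] at heq'] <;>
          rw [Sym2.eq_iff] at heq'
        · rcases heq' with ⟨h1, _⟩ | ⟨h1, h2⟩
          · exact h1
          · exact absurd (h1 ▸ hf1 y' hy'A) (hdisj y hyA)
        · -- y ∈ A, y' ∉ A so y' ∈ NB
          have hy'NB : y' ∈ NB := hy'A'.resolve_left (fun h => hy'A h.1)
          have hyne : y ≠ a0 := (hyA'.resolve_right (fun h => hdisj y hyA h.1)).2
          rcases heq' with ⟨h1, _⟩ | ⟨h1, _⟩
          · exact absurd h1 hyne
          · exact absurd (h1 ▸ hy'NB.1) (hdisj y hyA)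
        · have hyNB : y ∈ NB := hyA'.resolve_left (fun h => hyA h.1)
          have hy'ne : y' ≠ a0 := (hy'A'.resolve_right (fun h => hdisj y' hy'A h.1)).2
          rcases heq' with ⟨h1, _⟩ | ⟨_, h2⟩
          · exact absurd h1.symm hy'ne
          · exact absurd (h2.symm ▸ hyNB.1) (hdisj y' hy'A)
        · have hyNB : y ∈ NB := hyA'.resolve_left (fun h => hyA h.1)
          have hy'NB : y' ∈ NB := hy'A'.resolve_left (fun h => hy'A h.1)
          rcases heq' with ⟨_, h2⟩ | ⟨h1, _⟩
          · exact h2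
          · exact absurd (h1 ▸ hy'NB.1) (fun h => hdisj a0 ha0A h)
    have hS0card : S0.ncard ≤ D.ncard + 1 :=
      le_trans (Set.ncard_insert_le _ _) (by omega)
    refine le_trans (Nat.sInf_le ⟨S0, rfl, ?_⟩) hS0card
    have ha0c : a0 ∈ S0ᶜ := by
      intro h
      rcases Set.mem_insert_iff.mp h with h | h
      · exact hxA (h ▸ ha0A)
      · rcases h with h | h
        · exact h.2 rfl
        · exact hdisj a0 ha0A h.1
    have hiso : ∀ w : V1, w ∈ S0ᶜ → ¬ G1.Adj a0 w := by
      intro w hw hadj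
      have hwx : w ≠ x := fun h => hw (h ▸ Set.mem_insert _ _)
      rcases hcov w hwx with h | h
      · exact hw (Set.mem_insert_iff.mpr (Or.inr (Or.inl ⟨h, (G1.ne_of_adj hadj).symm⟩)))
      · exact hw (Set.mem_insert_iff.mpr (Or.inr (Or.inr ⟨h, hadj⟩)))
    by_cases hrest : ∃ w, w ∈ S0ᶜ ∧ w ≠ a0
    · obtain ⟨w0, hw0, hw0ne⟩ := hrest
      refine Or.inl (not_connected_of_invariant (G := G1.induce (S0ᶜ : Set V1))
        (P := fun z => (z : V1) = a0) ?_ (u := ⟨a0, ha0c⟩) (v := ⟨w0, hw0⟩) rfl hw0ne)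
      rintro ⟨z1, hz1⟩ ⟨z2, hz2⟩ hadj hz1a
      have hadj' : G1.Adj z1 z2 := hadj
      exact absurd (hz1a ▸ hadj') (hiso z2 hz2)
    · push_neg at hrest
      refine Or.inr ?_
      have : S0ᶜ ⊆ {a0} := fun w hw => hrest w hw
      calc (S0ᶜ).ncard ≤ ({a0} : Set V1).ncard := Set.ncard_le_ncard this (Set.toFinite _)
        _ = 1 := Set.ncard_singleton _

end Kappa

/-- Theorem 4.4, bounds (4.7). If `G1` is a connected `δ1`-regular graph
on `n` vertices with `δ1 ≥ 4` and `G2` is a connected `δ2`-regular graph on `δ1` vertices,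
then `min {λ1, κ1 + λ2 - 1, 2·λ2, λ2' + 2} ≤ λ'(G1 ® G2) ≤ min {λ1, 2·δ2}`. -/
theorem restrictedEdgeConn_replacementProduct_bounds
    {V1 V2 : Type*} [Fintype V1] [Fintype V2] {n δ1 δ2 : ℕ}
    (G1 : SimpleGraph V1) (G2 : SimpleGraph V2) (ℓ : V1 → V2 → V1)
    (hℓ : IsRPLabelling G1 ℓ)
    (hc1 : G1.Connected) (hc2 : G2.Connected)
    (hr1 : ∀ x : V1, (G1.neighborSet x).ncard = δ1)
    (hr2 : ∀ i : V2, (G2.neighborSet i).ncard = δ2)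
    (hn : Fintype.card V1 = n) (hd : Fintype.card V2 = δ1)
    (hδ1 : 4 ≤ δ1) :
    min (min (edgeConn G1) (vertexConn G1 + edgeConn G2 - 1))
        (min (2 * edgeConn G2) (restrictedEdgeConn G2 + 2))
      ≤ restrictedEdgeConn (replacementProduct G1 G2 ℓ) ∧
    restrictedEdgeConn (replacementProduct G1 G2 ℓ) ≤ min (edgeConn G1) (2 * δ2) := by
  classical
  obtain ⟨hinj, hadj⟩ := hℓ
  set H := replacementProduct G1 G2 ℓ with hHdef
  have hV1 : Nonempty V1 := hc1.nonempty
  have hV2 : Nonempty V2 := hc2.nonempty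
  haveI := hV1; haveI := hV2
  obtain ⟨x0⟩ := hV1
  obtain ⟨i0⟩ := hV2
  -- ℓ x enumerates the neighbours of x
  have hsurj : ∀ x y, G1.Adj x y → ∃ i, ℓ x i = y := by
    intro x y hxy
    have hrange : (Set.range (ℓ x)).ncard = Fintype.card V2 := by
      rw [← Set.image_univ, Set.ncard_image_of_injective _ (hinj x), Set.ncard_univ,
        Nat.card_eq_fintype_card]
    have hr : Set.range (ℓ x) = G1.neighborSet x := by
      apply Set.eq_of_subset_of_ncard_le
      · rintro - ⟨i, rfl⟩
        exact hadj x i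
      · rw [hr1 x, hrange, hd]
      · exact Set.toFinite _
    have : y ∈ Set.range (ℓ x) := by rw [hr]; exact hxy
    exact this
  -- basic cardinalities
  have hcardV1 : 2 ≤ Fintype.card V1 :=
    Fintype.one_lt_card_iff.mpr ⟨x0, ℓ x0 i0, G1.ne_of_adj (hadj x0 i0)⟩
  have hcardV2 : 4 ≤ Fintype.card V2 := by omega
  have hδ2 : 2 ≤ δ2 := by
    by_contra hlt
    push_neg at hlt
    have hδ2one : 1 ≤ δ2 := by
      obtain ⟨j, hj⟩ : ∃ j, j ≠ i0 := Fintype.exists_ne_of_one_lt_card (by omega) i0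
      obtain ⟨w⟩ := hc2.preconnected j i0
      cases w with
      | nil => exact absurd rfl hj
      | cons h _ =>
        have : 0 < (G2.neighborSet j).ncard := (Set.ncard_pos (Set.toFinite _)).mpr ⟨_, h⟩
        rw [hr2 j] at this
        omega
    have hδ2eq : δ2 = 1 := by omega
    have h1 : (G2.neighborSet i0).ncard = 1 := by rw [hr2]; omega
    obtain ⟨j0, hj0⟩ := Set.ncard_eq_one.mp h1
    have hadj0 : G2.Adj i0 j0 := by
      have : j0 ∈ G2.neighborSet i0 := by rw [hj0]; exact rfl
      exact this
    have h2 : (G2.neighborSet j0).ncard = 1 := by rw [hr2]; omega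
    obtain ⟨k0, hk0⟩ := Set.ncard_eq_one.mp h2
    have hik : k0 = i0 := by
      have : i0 ∈ G2.neighborSet j0 := hadj0.symm
      rw [hk0] at this
      exact this.symm
    obtain ⟨k, hk⟩ : ∃ k, k ∉ ({i0, j0} : Set V2) := by
      apply ncard_big
      have h3 : ({i0, j0} : Set V2).ncard ≤ 2 :=
        le_trans (Set.ncard_insert_le _ _) (by rw [Set.ncard_singleton])
      omega
    refine absurd hc2 (not_connected_of_invariant
      (P := fun a => a ∈ ({i0, j0} : Set V2)) ?_ (Set.mem_insert _ _) hk)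
    intro a b hab ha
    rcases ha with rfl | ha
    · have : b ∈ G2.neighborSet a := hab
      rw [hj0] at this
      exact Or.inr this
    · have ha' : a = j0 := ha
      subst ha'
      have : b ∈ G2.neighborSet a := hab
      rw [hk0] at this
      have : b = k0 := this
      rw [this, hik]
      exact Or.inl rfl
  -- λ(G2) ≤ δ2
  have hlam2 : edgeConn G2 ≤ δ2 := by
    set F2 : Set (Sym2 V2) := {e ∈ G2.edgeSet | i0 ∈ e} with hF2
    have himg : F2 = (fun j => s(i0, j)) '' G2.neighborSet i0 := by
      ext e
      constructor
      · rintro ⟨he, hm⟩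
        induction e using Sym2.ind with
        | _ a b =>
          rcases Sym2.mem_iff.mp hm with rfl | rfl
          · exact ⟨b, he, rfl⟩
          · exact ⟨a, (he : G2.Adj _ _).symm, Sym2.eq_swap.symm⟩
      · rintro ⟨j, hj, rfl⟩
        exact ⟨hj, Sym2.mem_iff.mpr (Or.inl rfl)⟩
    have hF2card : F2.ncard = δ2 := by
      rw [himg, Set.ncard_image_of_injOn, hr2]
      intro j hj j' hj' heq
      rw [Sym2.eq_iff] at heq
      rcases heq with ⟨_, h2⟩ | ⟨h1, _⟩
      · exact h2
      · exact absurd (h1 ▸ hj') (fun hmem => G2.irrefl hmem)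
    obtain ⟨k1, hk1⟩ : ∃ k, k ≠ i0 := Fintype.exists_ne_of_one_lt_card (by omega) i0
    have hdisc2 : ¬(G2.deleteEdges F2).Connected := by
      refine not_connected_of_invariant (P := fun a => a = i0) ?_ rfl hk1
      intro a b hab ha
      subst ha
      rw [SimpleGraph.deleteEdges_adj] at hab
      exact (hab.2 ⟨hab.1, Sym2.mem_iff.mpr (Or.inl rfl)⟩).elim
    exact hF2card ▸ edgeConn_le (Set.sep_subset _ _) hdisc2
  -- cross neighbours
  have hcr : ∀ p : V1 × V2, ∃ q : V1 × V2, H.Adj p q ∧ q.1 ≠ p.1 := by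
    rintro ⟨x, i⟩
    obtain ⟨k, hk⟩ := hsurj (ℓ x i) x (hadj x i).symm
    exact ⟨(ℓ x i, k), Or.inr ⟨hadj x i, rfl, hk⟩, G1.ne_of_adj (hadj x i) ∘ Eq.symm⟩
  have hcruniq : ∀ p q q' : V1 × V2, H.Adj p q → H.Adj p q' → q.1 ≠ p.1 → q'.1 ≠ p.1 →
      q = q' := by
    rintro p q q' (⟨h1, _⟩ | ⟨_, h2, h3⟩) hq' hne hne'
    · exact absurd h1.symm hne
    rcases hq' with ⟨h1', _⟩ | ⟨_, h2', h3'⟩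
    · exact absurd h1'.symm hne'
    have hfst : q.1 = q'.1 := h2 ▸ h2'.symm ▸ rfl
    refine Prod.ext hfst (hinj q.1 ?_)
    rw [h3, ← h3', hfst]
  -- ===== Upper bound 1 : λ'(H) ≤ 2 δ2 =====
  set u0 : V1 × V2 := (x0, i0) with hu0
  obtain ⟨v0, hv0adj, hv0ne⟩ := hcr u0
  have huvne : u0 ≠ v0 := fun h => hv0ne (h ▸ rfl)
  set Fu : Set (Sym2 (V1 × V2)) := {e ∈ H.edgeSet | (u0 ∈ e ∨ v0 ∈ e) ∧ e ≠ s(u0, v0)}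
    with hFudef
  have hFures : IsRestrictedEdgeCut H Fu := by
    refine ⟨Set.sep_subset _ _, ?_, ?_⟩
    · -- disconnected
      obtain ⟨w0, hw0⟩ : ∃ w, w ∉ ({u0, v0} : Set (V1 × V2)) := by
        apply ncard_big
        have h3 : ({u0, v0} : Set (V1 × V2)).ncard ≤ 2 :=
          le_trans (Set.ncard_insert_le _ _) (by rw [Set.ncard_singleton])
        have h4 : Fintype.card (V1 × V2) = Fintype.card V1 * Fintype.card V2 :=
          Fintype.card_prod _ _
        nlinarith
      refine not_connected_of_invariant (P := fun p => p ∈ ({u0, v0} : Set (V1 × V2))) ?_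
        (Set.mem_insert _ _) hw0
      intro p q hpq hp
      rw [SimpleGraph.deleteEdges_adj] at hpq
      rcases hp with rfl | hp
      · right
        by_contra hqv
        refine hpq.2 ⟨hpq.1, Or.inl (Sym2.mem_iff.mpr (Or.inl rfl)), fun heq => ?_⟩
        rw [Sym2.eq_iff] at heq
        rcases heq with ⟨_, h2⟩ | ⟨h1, _⟩
        · exact hqv (Set.mem_singleton_iff.mpr h2)
        · exact huvne h1
      · have hp' : p = v0 := hp
        subst hp'
        left
        by_contra hqu
        refine hpq.2 ⟨hpq.1, Or.inr (Sym2.mem_iff.mpr (Or.inl rfl)), fun heq => ?_⟩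
        rw [Sym2.eq_iff] at heq
        rcases heq with ⟨h1, _⟩ | ⟨_, h2⟩
        · exact huvne h1.symm
        · exact hqu h2
    · -- no isolated vertices
      intro p
      by_cases hpu : p = u0
      · subst hpu
        refine ⟨v0, SimpleGraph.deleteEdges_adj.mpr ⟨hv0adj, fun h => h.2.2 rfl⟩⟩
      by_cases hpv : p = v0
      · subst hpv
        refine ⟨u0, SimpleGraph.deleteEdges_adj.mpr
          ⟨hv0adj.symm, fun h => h.2.2 (Sym2.eq_swap ▸ rfl)⟩⟩
      -- p has a copy-neighbour avoiding u0 and v0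
      have h2 : 1 < (G2.neighborSet p.2).ncard := by rw [hr2]; omega
      obtain ⟨j1, hj1, j2, hj2, hjne⟩ := (Set.one_lt_ncard (Set.toFinite _)).mp h2
      have hpick : ∃ j, G2.Adj p.2 j ∧ (p.1, j) ≠ u0 ∧ (p.1, j) ≠ v0 := by
        by_cases hq1 : (p.1, j1) = u0 ∨ (p.1, j1) = v0
        · by_cases hq2 : (p.1, j2) = u0 ∨ (p.1, j2) = v0
          · exfalso
            rcases hq1 with h1 | h1 <;> rcases hq2 with h2 | h2
            · exact hjne (by rw [← h2] at h1; exact congrArg Prod.snd h1)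
            · exact hv0ne (by rw [← h1, ← h2])
            · exact hv0ne (by rw [← h1, ← h2])
            · exact hjne (by rw [← h2] at h1; exact congrArg Prod.snd h1)
          · push_neg at hq2
            exact ⟨j2, hj2, hq2.1, hq2.2⟩
        · push_neg at hq1
          exact ⟨j1, hj1, hq1.1, hq1.2⟩
      obtain ⟨j, hjadj, hju, hjv⟩ := hpick
      refine ⟨(p.1, j), SimpleGraph.deleteEdges_adj.mpr
        ⟨Or.inl ⟨rfl, hjadj⟩, ?_⟩⟩
      rintro ⟨-, hm, -⟩
      rcases hm with hm | hm <;> rw [Sym2.mem_iff] at hm <;> rcases hm with hm | hm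
      · exact hpu hm.symm
      · exact hju hm.symm
      · exact hpv hm.symm
      · exact hjv hm.symm
  have hFucard : Fu.ncard ≤ 2 * δ2 := by
    have hsub : Fu ⊆ (fun z => s(u0, z)) '' ((fun j => (u0.1, j)) '' G2.neighborSet u0.2)
        ∪ (fun z => s(v0, z)) '' ((fun j => (v0.1, j)) '' G2.neighborSet v0.2) := by
      rintro e ⟨he, hm, hne⟩
      induction e using Sym2.ind with
      | _ p q =>
        have hcopy : ∀ a b : V1 × V2, H.Adj a b → b ≠ v0 → a = u0 →
            b ∈ (fun j => (u0.1, j)) '' G2.neighborSet u0.2 := by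
          intro a b hab hbv ha
          rw [ha] at hab
          by_cases hb1 : b.1 = u0.1
          · rcases hab with ⟨_, hG2⟩ | ⟨hG1, _, _⟩
            · exact ⟨b.2, hG2, Prod.ext hb1.symm rfl⟩
            · exact absurd hb1.symm (G1.ne_of_adj hG1)
          · exact absurd (hcruniq u0 b v0 hab hv0adj hb1 hv0ne) hbv
        have hcopyv : ∀ a b : V1 × V2, H.Adj a b → b ≠ u0 → a = v0 →
            b ∈ (fun j => (v0.1, j)) '' G2.neighborSet v0.2 := by
          intro a b hab hbu ha
          rw [ha] at hab
          by_cases hb1 : b.1 = v0.1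
          · rcases hab with ⟨_, hG2⟩ | ⟨hG1, _, _⟩
            · exact ⟨b.2, hG2, Prod.ext hb1.symm rfl⟩
            · exact absurd hb1.symm (G1.ne_of_adj hG1)
          · exact absurd (hcruniq v0 b u0 hab hv0adj.symm hb1 (fun h => hv0ne h.symm)) hbu
        rcases hm with hm | hm <;> rw [Sym2.mem_iff] at hm
        · rcases hm with hp | hq2
          · by_cases hq : q = v0
            · exact absurd (by rw [← hp, hq]) hne
            · exact Or.inl ⟨q, hcopy p q he hq hp.symm, by rw [hp]⟩
          · by_cases hp' : p = v0
            · exact absurd (by rw [← hq2, hp', Sym2.eq_swap]) hne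
            · exact Or.inl ⟨p, hcopy q p (H.adj_symm he) hp' hq2.symm,
                by rw [hq2, Sym2.eq_swap]⟩
        · rcases hm with hp | hq2
          · by_cases hq : q = u0
            · exact absurd (by rw [← hp, hq, Sym2.eq_swap]) hne
            · exact Or.inr ⟨q, hcopyv p q he hq hp.symm, by rw [hp]⟩
          · by_cases hp' : p = u0
            · exact absurd (by rw [← hq2, hp']) hne
            · exact Or.inr ⟨p, hcopyv q p (H.adj_symm he) hp' hq2.symm,
                by rw [hq2, Sym2.eq_swap]⟩
    calc Fu.ncard ≤ _ := Set.ncard_le_ncard hsub (Set.toFinite _)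
      _ ≤ _ := Set.ncard_union_le _ _
      _ ≤ 2 * δ2 := by
        have c1 := Set.ncard_image_le (s := (fun j => (u0.1, j)) '' G2.neighborSet u0.2)
          (f := fun z => s(u0, z)) (Set.toFinite _)
        have c2 := Set.ncard_image_le (s := (fun j => (v0.1, j)) '' G2.neighborSet v0.2)
          (f := fun z => s(v0, z)) (Set.toFinite _)
        have c3 := Set.ncard_image_le (s := G2.neighborSet u0.2)
          (f := fun j => (u0.1, j)) (Set.toFinite _)
        have c4 := Set.ncard_image_le (s := G2.neighborSet v0.2)
          (f := fun j => (v0.1, j)) (Set.toFinite _)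
        rw [hr2] at c3 c4
        omega
  -- ===== Upper bound 2 : λ'(H) ≤ λ(G1) =====
  have hne1 : {k | ∃ F : Set (Sym2 V1), F ⊆ G1.edgeSet ∧ F.ncard = k ∧
      ¬(G1.deleteEdges F).Connected}.Nonempty := by
    refine ⟨G1.edgeSet.ncard, G1.edgeSet, le_refl _, rfl, ?_⟩
    refine not_connected_of_invariant (P := fun z => z = x0) ?_ rfl
      (G1.ne_of_adj (hadj x0 i0)).symm
    intro a b hab _
    rw [SimpleGraph.deleteEdges_adj] at hab
    exact (hab.2 hab.1).elim
  obtain ⟨F1, hF1sub, hF1card, hF1disc⟩ : ∃ F : Set (Sym2 V1), F ⊆ G1.edgeSet ∧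
      F.ncard = edgeConn G1 ∧ ¬(G1.deleteEdges F).Connected := Nat.sInf_mem hne1
  set F' : Set (Sym2 (V1 × V2)) := {e ∈ H.edgeSet | Sym2.map Prod.fst e ∈ F1} with hF'def
  have hF'res : IsRestrictedEdgeCut H F' := by
    refine ⟨Set.sep_subset _ _, ?_, ?_⟩
    · -- disconnected
      obtain ⟨a, b, hab⟩ : ∃ a b : V1, ¬(G1.deleteEdges F1).Reachable a b := by
        by_contra h
        push_neg at h
        exact hF1disc ⟨fun a b => h a b⟩
      refine not_connected_of_invariant
        (P := fun p => (G1.deleteEdges F1).Reachable a p.1) ?_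
        (u := (a, i0)) (v := (b, i0)) (SimpleGraph.Reachable.refl a) hab
      intro p q hpq hp
      rw [SimpleGraph.deleteEdges_adj] at hpq
      rcases hpq.1 with ⟨h1, _⟩ | ⟨h1, _, _⟩
      · exact h1 ▸ hp
      · refine hp.trans (SimpleGraph.Adj.reachable ?_)
        rw [SimpleGraph.deleteEdges_adj]
        refine ⟨h1, fun hmem => hpq.2 ⟨hpq.1, ?_⟩⟩
        simpa [Sym2.map_pair_eq] using hmem
    · -- no isolated vertices
      intro p
      have hpos : 0 < (G2.neighborSet p.2).ncard := by rw [hr2]; omega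
      obtain ⟨j, hj⟩ := (Set.ncard_pos (Set.toFinite _)).mp hpos
      refine ⟨(p.1, j), SimpleGraph.deleteEdges_adj.mpr ⟨Or.inl ⟨rfl, hj⟩, fun hmem => ?_⟩⟩
      have : s(p.1, p.1) ∈ F1 := by simpa [Sym2.map_pair_eq] using hmem.2
      exact G1.irrefl (hF1sub this)
  have hF'card : F'.ncard ≤ edgeConn G1 := by
    have hinjon : Set.InjOn (Sym2.map Prod.fst) F' := by
      intro e1 he1 e2 he2 heq
      induction e1 using Sym2.ind with
      | _ p q =>
        induction e2 using Sym2.ind with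
        | _ p' q' =>
          obtain ⟨hH1, hp1⟩ := he1
          obtain ⟨hH2, hp2⟩ := he2
          rw [Sym2.map_pair_eq] at heq hp1 hp2
          have hadjpq : G1.Adj p.1 q.1 := hF1sub hp1
          have hadjpq' : G1.Adj p'.1 q'.1 := hF1sub hp2
          have hHadj1 : H.Adj p q := hH1
          have hHadj2 : H.Adj p' q' := hH2
          rcases hHadj1 with ⟨h1, _⟩ | ⟨_, hl1, hl2⟩
          · exact absurd h1 (G1.ne_of_adj hadjpq)
          rcases hHadj2 with ⟨h1', _⟩ | ⟨_, hl1', hl2'⟩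
          · exact absurd h1' (G1.ne_of_adj hadjpq')
          rcases Sym2.eq_iff.mp heq with ⟨ha, hb⟩ | ⟨ha, hb⟩
          · have hp2eq : p.2 = p'.2 := by
              refine hinj p.1 ?_
              rw [hl1, ha, hl1', hb]
            have hq2eq : q.2 = q'.2 := by
              refine hinj q.1 ?_
              rw [hl2, hb, hl2', ha]
            rw [Prod.ext ha hp2eq, Prod.ext hb hq2eq]
          · have hp2eq : p.2 = q'.2 := by
              refine hinj p.1 ?_
              rw [hl1, ha, hl2', hb]
            have hq2eq : q.2 = p'.2 := by
              refine hinj q.1 ?_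
              rw [hl2, hb, hl1', ha]
            rw [Prod.ext ha hp2eq, Prod.ext hb hq2eq, Sym2.eq_swap]
    calc F'.ncard = (Sym2.map Prod.fst '' F').ncard := (Set.ncard_image_of_injOn hinjon).symm
      _ ≤ F1.ncard := Set.ncard_le_ncard (by rintro - ⟨e, he, rfl⟩; exact he.2) (Set.toFinite _)
      _ = edgeConn G1 := hF1card
  have hub : restrictedEdgeConn H ≤ min (edgeConn G1) (2 * δ2) :=
    le_min (le_trans (restrictedEdgeConn_le hF'res) hF'card)
      (le_trans (restrictedEdgeConn_le hFures) hFucard)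
  -- ===== Lower bound =====
  refine ⟨?_, hub⟩
  refine le_csInf ⟨Fu.ncard, Fu, hFures, rfl⟩ ?_
  rintro k ⟨F, ⟨hFsub, hFdisc, hFres⟩, rfl⟩
  -- a set X closed in H - F, with nonempty complement
  obtain ⟨u, v, huv⟩ : ∃ u v : V1 × V2, ¬(H.deleteEdges F).Reachable u v := by
    by_contra h
    push_neg at h
    exact hFdisc ⟨fun a b => h a b⟩
  set X : Set (V1 × V2) := {w | (H.deleteEdges F).Reachable u w} with hXdef
  have huX : u ∈ X := SimpleGraph.Reachable.refl u
  have hvX : v ∉ X := huv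
  have hbdX : ∀ p q, H.Adj p q → p ∈ X → q ∉ X → s(p, q) ∈ F := by
    intro p q hadjpq hp hq
    by_contra hn
    exact hq (hp.trans (SimpleGraph.Adj.reachable
      (SimpleGraph.deleteEdges_adj.mpr ⟨hadjpq, hn⟩)))
  have hbdXc : ∀ p q, H.Adj p q → p ∈ Xᶜ → q ∉ Xᶜ → s(p, q) ∈ F := by
    intro p q hadjpq hp hq
    rw [Sym2.eq_swap]
    exact hbdX q p hadjpq.symm (not_not.mp hq) hp
  by_cases hS : ∃ x, (∃ i, (x, i) ∈ X) ∧ (∃ i, (x, i) ∉ X)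
  · -- there is a split copy
    obtain ⟨x, hx1, hx2⟩ := hS
    by_cases hS2 : ∃ x', x' ≠ x ∧ (∃ i, (x', i) ∈ X) ∧ (∃ i, (x', i) ∉ X)
    · -- two split copies : 2 λ(G2)
      obtain ⟨x', hxne, hx1', hx2'⟩ := hS2
      have h1 := copy_cut G1 G2 ℓ F X x hbdX hx1 hx2
      have h2 := copy_cut G1 G2 ℓ F X x' hbdX hx1' hx2'
      have hsum : (F ∩ copyE V2 x).ncard + (F ∩ copyE V2 x').ncard ≤ F.ncard := by
        rw [← Set.ncard_union_eq ((copyE_disj (Ne.symm hxne)).mono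
          Set.inter_subset_right Set.inter_subset_right) (Set.toFinite _) (Set.toFinite _)]
        exact Set.ncard_le_ncard
          (Set.union_subset Set.inter_subset_left Set.inter_subset_left) (Set.toFinite _)
      have hmin : min (min (edgeConn G1) (vertexConn G1 + edgeConn G2 - 1))
          (min (2 * edgeConn G2) (restrictedEdgeConn G2 + 2)) ≤ 2 * edgeConn G2 :=
        le_trans (min_le_right _ _) (min_le_left _ _)
      omega
    · -- exactly one split copy
      have huniq : ∀ y, y ≠ x → (∀ i, (y, i) ∈ X) ∨ (∀ i, (y, i) ∉ X) := by
        intro y hy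
        by_cases h : ∃ i, (y, i) ∈ X
        · left
          intro i
          by_contra hi
          exact hS2 ⟨y, hy, h, i, hi⟩
        · right
          intro i hi
          exact h ⟨i, hi⟩
      set A : Set V1 := {y | y ≠ x ∧ ∀ i, (y, i) ∈ X} with hAdef
      set B : Set V1 := {y | y ≠ x ∧ ∀ i, (y, i) ∉ X} with hBdef
      by_cases hBne : B.Nonempty
      · by_cases hAne : A.Nonempty
        · -- both sides have full copies : κ(G1) + λ(G2) - 1
          have hk := kappa_bound G1 x A B
            (fun y hy => (huniq y hy).imp (fun h => ⟨hy, h⟩) (fun h => ⟨hy, h⟩))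
            (fun y hyA hyB => (hyB.2 i0) (hyA.2 i0))
            (fun h => h.1 rfl) (fun h => h.1 rfl) hAne hBne
          set D : Set (Sym2 V1) := {e ∈ G1.edgeSet | ∃ a ∈ A, ∃ b ∈ B, e = s(a, b)}
            with hDdef
          have hlift : D.ncard ≤ (F ∩ crossE V1 V2).ncard := by
            have hsub : D ⊆ Sym2.map Prod.fst '' (F ∩ crossE V1 V2) := by
              rintro e ⟨he, a, haA, b, hbB, rfl⟩
              have hab : G1.Adj a b := he
              obtain ⟨i, hi⟩ := hsurj a b hab
              obtain ⟨j, hj⟩ := hsurj b a hab.symm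
              refine ⟨s((a, i), (b, j)), ⟨hbdX _ _ (Or.inr ⟨hab, hi, hj⟩)
                (haA.2 i) (hbB.2 j), (a, i), (b, j), G1.ne_of_adj hab, rfl⟩, ?_⟩
              rw [Sym2.map_pair_eq]
            calc D.ncard ≤ _ := Set.ncard_le_ncard hsub (Set.toFinite _)
              _ ≤ (F ∩ crossE V1 V2).ncard := Set.ncard_image_le (Set.toFinite _)
          have hcopy := copy_cut G1 G2 ℓ F X x hbdX hx1 hx2
          have hsum : (F ∩ copyE V2 x).ncard + (F ∩ crossE V1 V2).ncard ≤ F.ncard := by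
            rw [← Set.ncard_union_eq ((copyE_crossE_disj x).mono
              Set.inter_subset_right Set.inter_subset_right) (Set.toFinite _)
              (Set.toFinite _)]
            exact Set.ncard_le_ncard
              (Set.union_subset Set.inter_subset_left Set.inter_subset_left) (Set.toFinite _)
          have hmin : min (min (edgeConn G1) (vertexConn G1 + edgeConn G2 - 1))
              (min (2 * edgeConn G2) (restrictedEdgeConn G2 + 2))
              ≤ vertexConn G1 + edgeConn G2 - 1 :=
            le_trans (min_le_left _ _) (min_le_right _ _)
          omega
        · -- A empty : X lives inside the copy of x
          have hZ : ∀ w, w ∈ X → w.1 = x := by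
            intro w hw
            by_contra hne
            rcases huniq w.1 hne with h | h
            · exact hAne ⟨w.1, hne, h⟩
            · exact (h w.2) (by rwa [Prod.mk.eta])
          refine le_trans (min_le_right _ _) ?_
          exact small_side G1 G2 ℓ ⟨hinj, hadj⟩ hsurj hr2 hlam2 F hFres X x hbdX hZ hx1 hx2
      · -- B empty : the complement of X lives inside the copy of x
        have hZ : ∀ w, w ∈ Xᶜ → w.1 = x := by
          intro w hw
          by_contra hne
          rcases huniq w.1 hne with h | h
          · exact hw (by have := h w.2; rwa [Prod.mk.eta] at this)
          · exact hBne ⟨w.1, hne, h⟩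
        refine le_trans (min_le_right _ _) ?_
        refine small_side G1 G2 ℓ ⟨hinj, hadj⟩ hsurj hr2 hlam2 F hFres Xᶜ x hbdXc hZ
          hx2 ?_
        obtain ⟨i, hi⟩ := hx1
        exact ⟨i, fun h => h hi⟩
  · -- no split copy : λ(G1)
    set AA : Set V1 := {y | ∀ i, (y, i) ∈ X} with hAAdef
    have hcases : ∀ y, y ∈ AA ∨ ∀ i, (y, i) ∉ X := by
      intro y
      by_cases h : ∃ i, (y, i) ∈ X
      · left
        intro i
        by_contra hi
        exact hS ⟨y, h, i, hi⟩
      · right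
        intro i hi
        exact h ⟨i, hi⟩
    have huA : u.1 ∈ AA := by
      rcases hcases u.1 with h | h
      · exact h
      · exact absurd huX (by have := h u.2; rwa [Prod.mk.eta] at this)
    have hvA : v.1 ∉ AA := by
      intro h
      exact hvX (by have := h v.2; rwa [Prod.mk.eta] at this)
    set D : Set (Sym2 V1) := {e ∈ G1.edgeSet | ∃ a ∈ AA, ∃ b ∈ (AAᶜ : Set V1), e = s(a, b)}
      with hDdef
    have hdisc : ¬(G1.deleteEdges D).Connected := by
      refine not_connected_of_invariant (P := fun y => y ∈ AA) ?_ huA hvA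
      intro a b hab ha
      rw [SimpleGraph.deleteEdges_adj] at hab
      by_contra hb
      exact hab.2 ⟨hab.1, a, ha, b, hb, rfl⟩
    have hlam1 : edgeConn G1 ≤ D.ncard := edgeConn_le (Set.sep_subset _ _) hdisc
    have hlift : D.ncard ≤ F.ncard := by
      have hsub : D ⊆ Sym2.map Prod.fst '' F := by
        rintro e ⟨he, a, haA, b, hbA, rfl⟩
        have hab : G1.Adj a b := he
        obtain ⟨i, hi⟩ := hsurj a b hab
        obtain ⟨j, hj⟩ := hsurj b a hab.symm
        have hbX : ∀ i', (b, i') ∉ X := (hcases b).resolve_left hbA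
        refine ⟨s((a, i), (b, j)), hbdX _ _ (Or.inr ⟨hab, hi, hj⟩) (haA i) (hbX j), ?_⟩
        rw [Sym2.map_pair_eq]
      calc D.ncard ≤ _ := Set.ncard_le_ncard hsub (Set.toFinite _)
        _ ≤ F.ncard := Set.ncard_image_le (Set.toFinite _)
    have hmin : min (min (edgeConn G1) (vertexConn G1 + edgeConn G2 - 1))
        (min (2 * edgeConn G2) (restrictedEdgeConn G2 + 2)) ≤ edgeConn G1 :=
      le_trans (min_le_left _ _) (min_le_left _ _)
    omega
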